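/- Fix m ≥ 1, constants b ∈ ℝ, σ ∈ ℝ, μ > 0, vectors β, γ ∈ [0,∞)^m, an m×m transition rate matrix R, a continuous function W : [0,∞) → ℝ with W(0) = 0, and initial values X₀ ≥ 0, U₀ ∈ [0,∞)^m. Let G = diag(γ). Suppose (X, U, L) and (X', U', L') are two triples of continuous functions where X, X' : [0,∞) → [0,∞), L is a boundary term for X at zero, L' is a boundary term for X' at zero, and for all t ≥ 0: X(t) = X₀ + ∫₀ᵗ [b + μ·V(s)] ds + σW(t) + L(t) and U(t) = U₀ + ∫₀ᵗ (R − G)U(s) ds + (β/μ)L(t), where V(s) = U₁(s) + ⋯ + U_m(s) (and likewise for the primed triple). Then X = X', U = U', and L = L'; i.e., pathwise uniqueness holds for the multi-stage near-Halfin–Whitt limit system. -/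

import Mathlib

open Finset Matrix MeasureTheory

/-- An `m × m` real matrix `R = (r_ij)` is a transition rate matrix if
`r_ij ≥ 0` for all `i ≠ j` and `r_ii = −Σ_{j≠i} r_ij` for each `i`. -/
def IsTransitionRateMatrix {m : ℕ} (R : Matrix (Fin m) (Fin m) ℝ) : Prop :=
  (∀ i j, i ≠ j → 0 ≤ R i j) ∧ ∀ i, R i i = -∑ j ∈ Finset.univ.erase i, R i j

/-- `L` is a boundary term for `X` at zero: `L(0) = 0`, `L ≥ 0` and nondecreasing
on `[0,∞)`, and the Lebesgue–Stieltjes measure induced by `L` assigns zero mass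
to the set `{t ≥ 0 : X(t) > 0}`. -/
def IsBoundaryTerm (X L : ℝ → ℝ) : Prop :=
  L 0 = 0 ∧ (∀ t : ℝ, 0 ≤ t → 0 ≤ L t) ∧ MonotoneOn L (Set.Ici 0) ∧
  ∃ S : StieltjesFunction ℝ, (∀ t : ℝ, 0 ≤ t → S t = L t) ∧
    (∀ t : ℝ, t ≤ 0 → S t = 0) ∧
    S.measure {t : ℝ | 0 ≤ t ∧ 0 < X t} = 0

lemma boundary_const {X L : ℝ → ℝ} (h : IsBoundaryTerm X L) {a t : ℝ}
    (ha : 0 ≤ a) (hat : a ≤ t) (hpos : ∀ s, a < s → s ≤ t → 0 < X s) :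
    L t = L a := by
  obtain ⟨hL0, hLnn, hmono, S, hSL, hS0, hSmeas⟩ := h
  have hsub : Set.Ioc a t ⊆ {s : ℝ | 0 ≤ s ∧ 0 < X s} :=
    fun s hs => ⟨ha.trans hs.1.le, hpos s hs.1 hs.2⟩
  have h0 : S.measure (Set.Ioc a t) = 0 := measure_mono_null hsub hSmeas
  rw [S.measure_Ioc, ENNReal.ofReal_eq_zero] at h0
  have h2 : S a ≤ S t := S.mono hat
  have h3 : S t = S a := le_antisymm (by linarith) h2
  rw [hSL a ha, hSL t (ha.trans hat)] at h3
  exact h3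

lemma boundary_repr {X L : ℝ → ℝ} (hX : ContinuousOn X (Set.Ici 0))
    (hXnn : ∀ t : ℝ, 0 ≤ t → 0 ≤ X t) (h : IsBoundaryTerm X L) {t : ℝ} (ht : 0 ≤ t) :
    (∃ τ ∈ Set.Icc (0:ℝ) t, L t = max 0 (L τ - X τ)) ∧
      ∀ s ∈ Set.Icc (0:ℝ) t, max 0 (L s - X s) ≤ L t := by
  have hub : ∀ s ∈ Set.Icc (0:ℝ) t, max 0 (L s - X s) ≤ L t := by
    intro s hs
    refine max_le (h.2.1 t ht) ?_
    have h1 : L s ≤ L t := h.2.2.1 hs.1 ht hs.2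
    have h2 : 0 ≤ X s := hXnn s hs.1
    linarith
  refine ⟨?_, hub⟩
  set Z := Set.Icc (0:ℝ) t ∩ X ⁻¹' {0} with hZ
  have hZclosed : IsClosed Z :=
    (hX.mono (Set.Icc_subset_Ici_self)).preimage_isClosed_of_isClosed
      isClosed_Icc isClosed_singleton
  have hZbdd : BddAbove Z := (bddAbove_Icc (a := (0:ℝ)) (b := t)).mono Set.inter_subset_left
  by_cases hne : Z.Nonempty
  · set τ := sSup Z with hτdef
    have hτZ : τ ∈ Z := hZclosed.csSup_mem hne hZbdd
    obtain ⟨hτIcc, hτX⟩ := hτZ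
    have hXτ : X τ = 0 := hτX
    refine ⟨τ, hτIcc, ?_⟩
    have hconst : L t = L τ := by
      refine boundary_const h hτIcc.1 hτIcc.2 (fun s hs1 hs2 => ?_)
      rcases lt_or_eq_of_le (hXnn s (hτIcc.1.trans hs1.le)) with hlt | heq
      · exact hlt
      · exfalso
        have : s ∈ Z := ⟨⟨hτIcc.1.trans hs1.le, hs2⟩, heq.symm⟩
        exact absurd (le_csSup hZbdd this) (not_le.2 hs1)
    rw [hconst, hXτ, sub_zero, max_eq_right (h.2.1 τ hτIcc.1)]
  · refine ⟨0, Set.left_mem_Icc.2 ht, ?_⟩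
    have hconst : L t = L 0 := by
      refine boundary_const h le_rfl ht (fun s hs1 hs2 => ?_)
      rcases lt_or_eq_of_le (hXnn s hs1.le) with hlt | heq
      · exact hlt
      · exact absurd ⟨⟨hs1.le, hs2⟩, heq.symm⟩ (fun hz => hne ⟨s, hz⟩)
    rw [hconst, h.1]
    have : 0 - X 0 ≤ 0 := by have := hXnn 0 le_rfl; linarith
    rw [h.1] at *
    exact (max_eq_left (by linarith)).symm

lemma boundary_lip {X L X' L' : ℝ → ℝ}
    (hX : ContinuousOn X (Set.Ici 0)) (hX' : ContinuousOn X' (Set.Ici 0))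
    (hXnn : ∀ t : ℝ, 0 ≤ t → 0 ≤ X t) (hXnn' : ∀ t : ℝ, 0 ≤ t → 0 ≤ X' t)
    (h : IsBoundaryTerm X L) (h' : IsBoundaryTerm X' L')
    {t K : ℝ} (ht : 0 ≤ t) (hK : 0 ≤ K)
    (hclose : ∀ s ∈ Set.Icc (0:ℝ) t, |(X s - L s) - (X' s - L' s)| ≤ K) :
    |L t - L' t| ≤ K := by
  obtain ⟨⟨τ, hτ, hrepr⟩, hub⟩ := boundary_repr hX hXnn h ht
  obtain ⟨⟨τ', hτ', hrepr'⟩, hub'⟩ := boundary_repr hX' hXnn' h' ht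
  have hmax : ∀ x y : ℝ, x ≤ y + K → max 0 x ≤ max 0 y + K := by
    intro x y hxy
    refine max_le (by have := le_max_left 0 y; linarith) ?_
    have := le_max_right 0 y; linarith
  rw [abs_le]
  constructor
  · -- -K ≤ L t - L' t, i.e. L' t ≤ L t + K
    have hc := hclose τ' hτ'
    rw [abs_le] at hc
    have h1 : L' τ' - X' τ' ≤ (L τ' - X τ') + K := by linarith [hc.2]
    have h2 : max 0 (L' τ' - X' τ') ≤ max 0 (L τ' - X τ') + K := hmax _ _ h1
    have h3 := hub τ' hτ'
    rw [hrepr'] at *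
    linarith
  · -- L t - L' t ≤ K, i.e. L t ≤ L' t + K
    have hc := hclose τ hτ
    rw [abs_le] at hc
    have h1 : L τ - X τ ≤ (L' τ - X' τ) + K := by linarith [hc.1]
    have h2 : max 0 (L τ - X τ) ≤ max 0 (L' τ - X' τ) + K := hmax _ _ h1
    have h3 := hub' τ hτ
    rw [hrepr] at *
    linarith

lemma gronwall_zero {g : ℝ → ℝ} {C : ℝ} (hC : 0 ≤ C)
    (hg : ContinuousOn g (Set.Ici 0)) (hgnn : ∀ t : ℝ, 0 ≤ t → 0 ≤ g t)
    (hineq : ∀ t : ℝ, 0 ≤ t → g t ≤ C * ∫ s in (0:ℝ)..t, g s) :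
    ∀ t : ℝ, 0 ≤ t → g t = 0 := by
  intro T hT
  set φ : ℝ → ℝ := fun u => ∫ s in (0:ℝ)..u, g s with hφ
  have hint : ∀ u : ℝ, 0 ≤ u → IntervalIntegrable g volume 0 u := fun u hu =>
    (hg.mono (by rw [Set.uIcc_of_le hu]; exact fun x hx => hx.1)).intervalIntegrable
  have hφnn : ∀ u : ℝ, 0 ≤ u → 0 ≤ φ u := fun u hu =>
    intervalIntegral.integral_nonneg hu (fun s hs => hgnn s hs.1)
  have hφcont : ContinuousOn φ (Set.Icc 0 T) := by
    have h1 := intervalIntegral.continuousOn_primitive_interval'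
      (μ := volume) (hint T hT) (by rw [Set.uIcc_of_le hT]; exact Set.left_mem_Icc.2 hT)
    exact h1.mono (by rw [Set.uIcc_of_le hT])
  have hφderiv : ∀ u ∈ Set.Ico (0:ℝ) T, HasDerivWithinAt φ (g u) (Set.Ici u) u := by
    intro u hu
    have hsub : Set.Ioi u ⊆ Set.Ici (0:ℝ) := fun x hx => (hu.1.trans hx.le)
    refine intervalIntegral.integral_hasDerivWithinAt_right (hint u hu.1)
      ⟨Set.Ici 0, ?_, hg.aestronglyMeasurable measurableSet_Ici⟩
      ((hg u hu.1).mono hsub)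
    exact Filter.mem_of_superset self_mem_nhdsWithin hsub
  have key := norm_le_gronwallBound_of_norm_deriv_right_le (δ := 0) (K := C) (ε := 0)
    hφcont hφderiv (by simp [hφ]) ?_ T (Set.right_mem_Icc.2 hT)
  · rw [gronwallBound_ε0_δ0] at key
    have hφT : φ T = 0 := le_antisymm (by simpa [Real.norm_eq_abs, abs_of_nonneg (hφnn T hT)] using key) (hφnn T hT)
    have := hineq T hT
    rw [show (∫ s in (0:ℝ)..T, g s) = φ T from rfl, hφT, mul_zero] at this
    exact le_antisymm this (hgnn T hT)
  · intro u hu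
    rw [Real.norm_eq_abs, Real.norm_eq_abs, abs_of_nonneg (hgnn u hu.1),
      abs_of_nonneg (hφnn u hu.1), add_zero]
    exact hineq u hu.1

/-- Pathwise uniqueness for the multi-stage near-Halfin–Whitt limit system with
`m` vacation stages: two continuous solutions `(X, U, L)` and `(X', U', L')` of
`X(t) = X₀ + ∫₀ᵗ [b + μV(s)] ds + σW(t) + L(t)`,
`U(t) = U₀ + ∫₀ᵗ (R − G)U(s) ds + (β/μ)L(t)`,
where `V = Σᵢ Uᵢ`, `G = diag(γ)`, `X, X' ≥ 0` and `L, L'` are boundary terms at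
zero, coincide. -/
theorem multistage_near_hw_pathwise_uniqueness
    (m : ℕ) (hm : 1 ≤ m)
    (b σ μ : ℝ) (hμ : 0 < μ)
    (β γ : Fin m → ℝ) (hβ : ∀ i, 0 ≤ β i) (hγ : ∀ i, 0 ≤ γ i)
    (R : Matrix (Fin m) (Fin m) ℝ) (hR : IsTransitionRateMatrix R)
    (W : ℝ → ℝ) (hW : ContinuousOn W (Set.Ici 0)) (hW0 : W 0 = 0)
    (X₀ : ℝ) (hX₀ : 0 ≤ X₀) (U₀ : Fin m → ℝ) (hU₀ : ∀ i, 0 ≤ U₀ i)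
    (X L X' L' : ℝ → ℝ) (U U' : ℝ → Fin m → ℝ)
    (hX : ContinuousOn X (Set.Ici 0)) (hX' : ContinuousOn X' (Set.Ici 0))
    (hL : ContinuousOn L (Set.Ici 0)) (hL' : ContinuousOn L' (Set.Ici 0))
    (hU : ∀ i, ContinuousOn (fun t => U t i) (Set.Ici 0))
    (hU' : ∀ i, ContinuousOn (fun t => U' t i) (Set.Ici 0))
    (hXnn : ∀ t : ℝ, 0 ≤ t → 0 ≤ X t) (hXnn' : ∀ t : ℝ, 0 ≤ t → 0 ≤ X' t)
    (hbdry : IsBoundaryTerm X L) (hbdry' : IsBoundaryTerm X' L')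
    (heqX : ∀ t : ℝ, 0 ≤ t →
      X t = X₀ + (∫ s in (0:ℝ)..t, (b + μ * ∑ i, U s i)) + σ * W t + L t)
    (heqU : ∀ t : ℝ, 0 ≤ t → ∀ i, U t i = U₀ i +
      (∫ s in (0:ℝ)..t, ((R - Matrix.diagonal γ) *ᵥ (U s)) i) + (β i / μ) * L t)
    (heqX' : ∀ t : ℝ, 0 ≤ t →
      X' t = X₀ + (∫ s in (0:ℝ)..t, (b + μ * ∑ i, U' s i)) + σ * W t + L' t)
    (heqU' : ∀ t : ℝ, 0 ≤ t → ∀ i, U' t i = U₀ i +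
      (∫ s in (0:ℝ)..t, ((R - Matrix.diagonal γ) *ᵥ (U' s)) i) + (β i / μ) * L' t) :
    ∀ t : ℝ, 0 ≤ t → X t = X' t ∧ (∀ i, U t i = U' t i) ∧ L t = L' t := by
  set A := R - Matrix.diagonal γ with hAdef
  set Ka := ∑ i : Fin m, ∑ j : Fin m, |A i j| with hKadef
  have hKa0 : 0 ≤ Ka :=
    Finset.sum_nonneg fun i _ => Finset.sum_nonneg fun j _ => abs_nonneg _
  have hKaij : ∀ i j, |A i j| ≤ Ka := by
    intro i j
    calc |A i j| ≤ ∑ j' : Fin m, |A i j'| :=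
          Finset.single_le_sum (f := fun j' => |A i j'|)
            (fun k _ => abs_nonneg _) (Finset.mem_univ j)
      _ ≤ Ka := Finset.single_le_sum (f := fun i => ∑ j' : Fin m, |A i j'|)
          (fun k _ => Finset.sum_nonneg fun j' _ => abs_nonneg _) (Finset.mem_univ i)
  set g : ℝ → ℝ := fun t => ∑ i, |U t i - U' t i| with hgdef
  have hgnn : ∀ t : ℝ, 0 ≤ g t := fun t => Finset.sum_nonneg fun i _ => abs_nonneg _
  have hgcont : ContinuousOn g (Set.Ici 0) :=
    continuousOn_finset_sum Finset.univ fun i _ => ((hU i).sub (hU' i)).abs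
  -- integrability helper
  have hII : ∀ (f : ℝ → ℝ), ContinuousOn f (Set.Ici 0) →
      ∀ t : ℝ, 0 ≤ t → IntervalIntegrable f volume 0 t := fun f hf t ht =>
    (hf.mono (by rw [Set.uIcc_of_le ht]; exact fun x hx => hx.1)).intervalIntegrable
  -- continuity of the various integrands
  have hf1 : ContinuousOn (fun s => b + μ * ∑ i, U s i) (Set.Ici 0) :=
    continuousOn_const.add (continuousOn_const.mul
      (continuousOn_finset_sum Finset.univ fun i _ => hU i))
  have hf1' : ContinuousOn (fun s => b + μ * ∑ i, U' s i) (Set.Ici 0) :=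
    continuousOn_const.add (continuousOn_const.mul
      (continuousOn_finset_sum Finset.univ fun i _ => hU' i))
  have hAU : ∀ i, ContinuousOn (fun s => (A *ᵥ U s) i) (Set.Ici 0) := by
    intro i
    have : (fun s => (A *ᵥ U s) i) = fun s => ∑ j, A i j * U s j := by
      funext s; simp [Matrix.mulVec, dotProduct]
    rw [this]
    exact continuousOn_finset_sum Finset.univ fun j _ => continuousOn_const.mul (hU j)
  have hAU' : ∀ i, ContinuousOn (fun s => (A *ᵥ U' s) i) (Set.Ici 0) := by
    intro i
    have : (fun s => (A *ᵥ U' s) i) = fun s => ∑ j, A i j * U' s j := by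
      funext s; simp [Matrix.mulVec, dotProduct]
    rw [this]
    exact continuousOn_finset_sum Finset.univ fun j _ => continuousOn_const.mul (hU' j)
  -- Step 1: Lipschitz estimate for the boundary terms
  have hLdiff : ∀ t : ℝ, 0 ≤ t → |L t - L' t| ≤ μ * ∫ s in (0:ℝ)..t, g s := by
    intro t ht
    have hintg : 0 ≤ ∫ s in (0:ℝ)..t, g s :=
      intervalIntegral.integral_nonneg ht fun s _ => hgnn s
    refine boundary_lip hX hX' hXnn hXnn' hbdry hbdry' ht
      (mul_nonneg hμ.le hintg) ?_
    intro s hs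
    have hs0 : (0:ℝ) ≤ s := hs.1
    have e1 : (X s - L s) - (X' s - L' s)
        = (∫ r in (0:ℝ)..s, (b + μ * ∑ i, U r i))
          - (∫ r in (0:ℝ)..s, (b + μ * ∑ i, U' r i)) := by
      rw [heqX s hs0, heqX' s hs0]; ring
    rw [e1, ← intervalIntegral.integral_sub (hII _ hf1 s hs0) (hII _ hf1' s hs0)]
    calc |∫ r in (0:ℝ)..s, ((b + μ * ∑ i, U r i) - (b + μ * ∑ i, U' r i))|
        ≤ ∫ r in (0:ℝ)..s, |(b + μ * ∑ i, U r i) - (b + μ * ∑ i, U' r i)| :=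
          intervalIntegral.abs_integral_le_integral_abs hs0
      _ ≤ ∫ r in (0:ℝ)..s, μ * g r := by
          refine intervalIntegral.integral_mono_on hs0
            (hII _ ((hf1.sub hf1').abs) s hs0)
            (hII _ (continuousOn_const.mul hgcont) s hs0) ?_
          intro r _
          have e2 : (b + μ * ∑ i, U r i) - (b + μ * ∑ i, U' r i)
              = μ * (∑ i, (U r i - U' r i)) := by
            rw [Finset.sum_sub_distrib]; ring
          rw [e2, abs_mul, abs_of_pos hμ]
          exact mul_le_mul_of_nonneg_left
            (Finset.abs_sum_le_sum_abs _ _) hμ.le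
      _ ≤ ∫ r in (0:ℝ)..t, μ * g r := by
          refine intervalIntegral.integral_mono_interval le_rfl hs0 hs.2
            (Filter.Eventually.of_forall fun r => mul_nonneg hμ.le (hgnn r))
            (hII _ (continuousOn_const.mul hgcont) t ht)
      _ = μ * ∫ s in (0:ℝ)..t, g s := intervalIntegral.integral_const_mul μ g
  -- Step 2: integral inequality for g
  have hC0 : 0 ≤ (m : ℝ) * Ka + ∑ i, β i :=
    add_nonneg (mul_nonneg (Nat.cast_nonneg m) hKa0)
      (Finset.sum_nonneg fun i _ => hβ i)
  have hgineq : ∀ t : ℝ, 0 ≤ t →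
      g t ≤ ((m : ℝ) * Ka + ∑ i, β i) * ∫ s in (0:ℝ)..t, g s := by
    intro t ht
    set I := ∫ s in (0:ℝ)..t, g s with hIdef
    have hI0 : 0 ≤ I := intervalIntegral.integral_nonneg ht fun s _ => hgnn s
    have hcomp : ∀ i, |U t i - U' t i| ≤ Ka * I + β i * I := by
      intro i
      have e1 : U t i - U' t i
          = (∫ s in (0:ℝ)..t, ((A *ᵥ U s) i - (A *ᵥ U' s) i))
            + (β i / μ) * (L t - L' t) := by
        rw [heqU t ht i, heqU' t ht i,
          intervalIntegral.integral_sub (hII _ (hAU i) t ht) (hII _ (hAU' i) t ht)]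
        ring
      rw [e1]
      refine (abs_add_le _ _).trans (add_le_add ?_ ?_)
      · calc |∫ s in (0:ℝ)..t, ((A *ᵥ U s) i - (A *ᵥ U' s) i)|
            ≤ ∫ s in (0:ℝ)..t, |(A *ᵥ U s) i - (A *ᵥ U' s) i| :=
              intervalIntegral.abs_integral_le_integral_abs ht
          _ ≤ ∫ s in (0:ℝ)..t, Ka * g s := by
              refine intervalIntegral.integral_mono_on ht
                (hII _ (((hAU i).sub (hAU' i)).abs) t ht)
                (hII _ (continuousOn_const.mul hgcont) t ht) ?_
              intro s _
              have e2 : (A *ᵥ U s) i - (A *ᵥ U' s) i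
                  = ∑ j, A i j * (U s j - U' s j) := by
                simp [Matrix.mulVec, dotProduct, ← Finset.sum_sub_distrib,
                  mul_sub]
              rw [e2]
              calc |∑ j, A i j * (U s j - U' s j)|
                  ≤ ∑ j, |A i j * (U s j - U' s j)| :=
                    Finset.abs_sum_le_sum_abs _ _
                _ ≤ ∑ j, Ka * |U s j - U' s j| := by
                    refine Finset.sum_le_sum fun j _ => ?_
                    rw [abs_mul]
                    exact mul_le_mul_of_nonneg_right (hKaij i j) (abs_nonneg _)
                _ = Ka * g s := by rw [← Finset.mul_sum]
          _ = Ka * I := intervalIntegral.integral_const_mul Ka g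
      · rw [abs_mul, abs_of_nonneg (div_nonneg (hβ i) hμ.le)]
        have h1 : (β i / μ) * |L t - L' t| ≤ (β i / μ) * (μ * I) :=
          mul_le_mul_of_nonneg_left (hLdiff t ht) (div_nonneg (hβ i) hμ.le)
        have h2 : (β i / μ) * (μ * I) = β i * I := by
          field_simp
        linarith
    calc g t = ∑ i, |U t i - U' t i| := rfl
      _ ≤ ∑ i, (Ka * I + β i * I) := Finset.sum_le_sum fun i _ => hcomp i
      _ = ((m : ℝ) * Ka + ∑ i, β i) * I := by
          rw [Finset.sum_add_distrib, Finset.sum_const, Finset.card_univ,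
            Fintype.card_fin, ← Finset.sum_mul]
          push_cast
          ring
  -- Step 3: Gronwall
  have hg0 := gronwall_zero hC0 hgcont (fun t _ => hgnn t) hgineq
  have hUeq : ∀ s : ℝ, 0 ≤ s → ∀ i, U s i = U' s i := by
    intro s hs i
    have h1 : |U s i - U' s i| ≤ g s :=
      Finset.single_le_sum (f := fun j => |U s j - U' s j|)
        (fun j _ => abs_nonneg _) (Finset.mem_univ i)
    rw [hg0 s hs] at h1
    have h2 : |U s i - U' s i| = 0 := le_antisymm h1 (abs_nonneg _)
    have := abs_eq_zero.1 h2
    linarith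
  intro t ht
  have hginteq : (∫ s in (0:ℝ)..t, g s) = 0 := by
    rw [intervalIntegral.integral_congr (g := fun _ => (0:ℝ))
      (fun s hs => hg0 s (by rw [Set.uIcc_of_le ht] at hs; exact hs.1)),
      intervalIntegral.integral_zero]
  have hLeq : L t = L' t := by
    have h1 := hLdiff t ht
    rw [hginteq, mul_zero] at h1
    have h2 : |L t - L' t| = 0 := le_antisymm h1 (abs_nonneg _)
    have := abs_eq_zero.1 h2
    linarith
  refine ⟨?_, hUeq t ht, hLeq⟩
  have hint_eq : (∫ s in (0:ℝ)..t, (b + μ * ∑ i, U s i))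
      = ∫ s in (0:ℝ)..t, (b + μ * ∑ i, U' s i) := by
    refine intervalIntegral.integral_congr fun s hs => ?_
    rw [Set.uIcc_of_le ht] at hs
    have := hUeq s hs.1
    simp only [this]
  rw [heqX t ht, heqX' t ht, hLeq, hint_eq]
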